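/- For real numbers $a, b$ with $0 < a$ and $b > 2a$, the integral $\int_0^{\infty} \frac{(\kappa_q(a) - \kappa_q(b))^2}{q}\, dq \le 2(a-b)^2$, where for $q > 0$, $\kappa_q(y) := \min(q, \max(q/2, y))$. -/
import Mathlib


open MeasureTheory

/-- The clamping function `κ_q(y) = min(q, max(q/2, y))`. -/
noncomputable def kappa (q y : ℝ) : ℝ := min q (max (q / 2) y)

lemma kappa_eq_q {q y : ℝ} (hq : 0 < q) (h : q ≤ y) : kappa q y = q := by
  unfold kappa
  rw [max_eq_right (by linarith), min_eq_left h]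

lemma kappa_eq_half {q y : ℝ} (hq : 0 < q) (h : y ≤ q / 2) : kappa q y = q / 2 := by
  unfold kappa
  rw [max_eq_left h, min_eq_right (by linarith)]

lemma kappa_le (q y : ℝ) : kappa q y ≤ q := min_le_left _ _

lemma half_le_kappa {q : ℝ} (y : ℝ) (hq : 0 ≤ q) : q / 2 ≤ kappa q y :=
  le_min (by linarith) (le_max_left _ _)

theorem kappa_integral_case_far (a b : ℝ) (ha : 0 < a) (hb : 2 * a < b) :
    (∫ q in Set.Ioi (0 : ℝ), (kappa q a - kappa q b) ^ 2 / q) ≤ 2 * (a - b) ^ 2 := by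
  have hb0 : 0 < b := by linarith
  set g : ℝ → ℝ := Set.indicator (Set.Ioo a (2*b)) (fun q => q/4) with hg
  have hmeas : MeasurableSet (Set.Ioo a (2*b)) := measurableSet_Ioo
  have hsub : Set.Ioo a (2*b) ⊆ Set.Ioi (0:ℝ) := fun x hx => lt_trans ha hx.1
  have hgint : Integrable g ((volume : Measure ℝ).restrict (Set.Ioi 0)) := by
    apply Integrable.restrict
    rw [hg, integrable_indicator_iff hmeas]
    exact ((continuous_id.div_const 4).integrableOn_Icc).mono_set Set.Ioo_subset_Icc_self
  have hbound : ∀ q ∈ Set.Ioi (0:ℝ), (kappa q a - kappa q b) ^ 2 / q ≤ g q := by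
    intro q hq
    simp only [Set.mem_Ioi] at hq
    by_cases h1 : q ≤ a
    · rw [kappa_eq_q hq h1, kappa_eq_q hq (by linarith)]
      simp only [hg, Set.indicator_apply]
      split
      · simp; positivity
      · simp
    by_cases h2 : 2*b ≤ q
    · rw [kappa_eq_half hq (show a ≤ q/2 by linarith),
        kappa_eq_half hq (by linarith)]
      simp only [hg, Set.indicator_apply]
      split
      · simp; positivity
      · simp
    · push_neg at h1 h2
      have hmem : q ∈ Set.Ioo a (2*b) := ⟨h1, h2⟩
      rw [hg, Set.indicator_of_mem hmem]
      have ha1 : q/2 ≤ kappa q a := half_le_kappa a hq.le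
      have ha2 : kappa q a ≤ q := kappa_le q a
      have hb1 : q/2 ≤ kappa q b := half_le_kappa b hq.le
      have hb2 : kappa q b ≤ q := kappa_le q b
      rw [div_le_iff₀ hq]
      nlinarith
  have h1 : (∫ q in Set.Ioi (0 : ℝ), (kappa q a - kappa q b) ^ 2 / q) ≤
      ∫ q in Set.Ioi (0:ℝ), g q := by
    apply integral_mono_of_nonneg
    · filter_upwards [ae_restrict_mem measurableSet_Ioi] with q hq using
        div_nonneg (sq_nonneg _) (le_of_lt hq)
    · exact hgint
    · filter_upwards [ae_restrict_mem measurableSet_Ioi] with q hq using hbound q hq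
  refine h1.trans ?_
  have h2 : (∫ q in Set.Ioi (0:ℝ), g q) = ∫ q in Set.Ioo a (2*b), q/4 := by
    rw [hg, integral_indicator hmeas, Measure.restrict_restrict hmeas,
      Set.inter_eq_left.mpr hsub]
  rw [h2, ← integral_Ioc_eq_integral_Ioo,
    ← intervalIntegral.integral_of_le (by linarith : a ≤ 2*b)]
  have h3 : (∫ q in a..(2*b), q/4) = ((2*b)^2 - a^2) / 8 := by
    rw [intervalIntegral.integral_div, integral_id]
    ring
  rw [h3]
  nlinarith
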